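/- Let X = {X_0, …, X_{L−1}} be an (N,M,L)-FHS set over F with N ≥ 2, and let k be an integer with 2 ≤ k < L and k | L. For 0 ≤ i ≤ L/k − 1 define Y_i : Z_{kN} → F by Y_i(k·t_1 + t_0) = X_{ki + t_0}(t_1) for 0 ≤ t_0 ≤ k−1 and 0 ≤ t_1 ≤ N−1, and let Y = {Y_0, …, Y_{L/k−1}}, a (kN, M, L/k)-FHS set. If X has optimal AHC, then Y has optimal AHC. -/

import Mathlib

open Finset

/-- Periodic Hamming correlation of two FHSs `X, Y : ZMod N → F` at shift `τ`. -/
def Hcorr {N : ℕ} [NeZero N] {F : Type*} [DecidableEq F]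
    (X Y : ZMod N → F) (τ : ZMod N) : ℕ :=
  (Finset.univ.filter (fun t => X t = Y (t + τ))).card

/-- `N_X(a)`: number of occurrences of frequency `a` in the FHS `X`. -/
def countFreq {N : ℕ} [NeZero N] {F : Type*} [DecidableEq F]
    (X : ZMod N → F) (a : F) : ℕ :=
  (Finset.univ.filter (fun t => X t = a)).card

/-- `N_U(a)`: total number of occurrences of `a` in the FHS set `U`. -/
def countFreqSet {N L : ℕ} [NeZero N] {F : Type*} [DecidableEq F]
    (U : Fin L → ZMod N → F) (a : F) : ℕ :=
  ∑ i : Fin L, countFreq (U i) a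

/-- `S_a(U)`: sum of all out-of-phase Hamming autocorrelation values. -/
def Sa {N L : ℕ} [NeZero N] {F : Type*} [DecidableEq F]
    (U : Fin L → ZMod N → F) : ℕ :=
  ∑ i : Fin L, ∑ τ ∈ Finset.univ \ {(0 : ZMod N)}, Hcorr (U i) (U i) τ

/-- `S_c(U)`: sum of all Hamming crosscorrelation values (ordered pairs `i ≠ j`). -/
def Sc {N L : ℕ} [NeZero N] {F : Type*} [DecidableEq F]
    (U : Fin L → ZMod N → F) : ℕ :=
  ∑ i : Fin L, ∑ j ∈ Finset.univ \ {i}, ∑ τ : ZMod N, Hcorr (U i) (U j) τ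

/-- Average Hamming autocorrelation `A_a(U) = S_a(U)/(L(N-1))`. -/
def Aa {N L : ℕ} [NeZero N] {F : Type*} [DecidableEq F]
    (U : Fin L → ZMod N → F) : ℚ :=
  (Sa U : ℚ) / ((L : ℚ) * ((N : ℚ) - 1))

/-- Average Hamming crosscorrelation `A_c(U) = S_c(U)/(L(L-1)N)`. -/
def Ac {N L : ℕ} [NeZero N] {F : Type*} [DecidableEq F]
    (U : Fin L → ZMod N → F) : ℚ :=
  (Sc U : ℚ) / ((L : ℚ) * ((L : ℚ) - 1) * (N : ℚ))

/-- `H_a(U)`: maximum out-of-phase Hamming autocorrelation of the set `U`. -/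
def Ha {N L : ℕ} [NeZero N] {F : Type*} [DecidableEq F]
    (U : Fin L → ZMod N → F) : ℕ :=
  Finset.univ.sup fun i => (Finset.univ \ {(0 : ZMod N)}).sup fun τ => Hcorr (U i) (U i) τ

/-- `H_c(U)`: maximum Hamming crosscorrelation of the set `U`. -/
def Hc {N L : ℕ} [NeZero N] {F : Type*} [DecidableEq F]
    (U : Fin L → ZMod N → F) : ℕ :=
  Finset.univ.sup fun i => (Finset.univ \ {i}).sup fun j =>
    Finset.univ.sup fun τ => Hcorr (U i) (U j) τ

/-- `U` has optimal average Hamming correlation (meets the Peng et al. AHC bound with equality). -/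
def optimalAHC {N L : ℕ} [NeZero N] {F : Type*} [Fintype F] [DecidableEq F]
    (U : Fin L → ZMod N → F) : Prop :=
  Aa U / ((N : ℚ) * ((L : ℚ) - 1)) + Ac U / ((N : ℚ) - 1)
    = ((N : ℚ) * L - Fintype.card F) /
      ((Fintype.card F : ℚ) * ((N : ℚ) - 1) * ((L : ℚ) - 1))

/-- The cyclotomic class `C_r = {α^(Ml+r) : 0 ≤ l ≤ f-1}`. -/
def cycClass {F : Type*} [Monoid F] [DecidableEq F] (α : F) (M f r : ℕ) : Finset F :=
  (Finset.range f).image fun l => α ^ (M * l + r)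

/-- The cyclotomic number `(i,j)_M = |(C_i + 1) ∩ C_j|`. -/
def cycNum {F : Type*} [Field F] [DecidableEq F] (α : F) (M f i j : ℕ) : ℕ :=
  (((cycClass α M f i).image fun x => x + 1) ∩ cycClass α M f j).card



section AuxLemmas

variable {β : Type*} [AddCommMonoid β]

private lemma sum_zmod {n : ℕ} [NeZero n] (f : ZMod n → β) :
    ∑ s : ZMod n, f s = ∑ m ∈ Finset.range n, f (m : ZMod n) := by
  refine Finset.sum_nbij' (fun s => ZMod.val s) (fun m => ((m : ℕ) : ZMod n)) ?_ ?_ ?_ ?_ ?_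
  · intro s _; exact Finset.mem_range.mpr (ZMod.val_lt s)
  · intro m _; exact Finset.mem_univ _
  · intro s _; exact ZMod.natCast_rightInverse s
  · intro m hm; exact ZMod.val_cast_of_lt (Finset.mem_range.mp hm)
  · intro s _; rw [ZMod.natCast_rightInverse s]

private lemma sum_range_mul' (k n : ℕ) (hk : 0 < k) (f : ℕ → β) :
    ∑ m ∈ Finset.range (k * n), f m
      = ∑ t1 ∈ Finset.range n, ∑ t0 ∈ Finset.range k, f (k * t1 + t0) := by
  rw [← Finset.sum_product']
  refine (Finset.sum_nbij' (fun p => k * p.1 + p.2) (fun m => (m / k, m % k)) ?_ ?_ ?_ ?_ ?_).symm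
  · intro p hp
    simp only [Finset.mem_product, Finset.mem_range] at hp
    refine Finset.mem_range.mpr ?_
    calc k * p.1 + p.2 < k * p.1 + k := by omega
      _ = k * (p.1 + 1) := by ring
      _ ≤ k * n := Nat.mul_le_mul_left _ (by omega)
  · intro m hm
    simp only [Finset.mem_product, Finset.mem_range]
    exact ⟨Nat.div_lt_of_lt_mul (Finset.mem_range.mp hm), Nat.mod_lt _ hk⟩
  · intro p hp
    simp only [Finset.mem_product, Finset.mem_range] at hp
    have h1 : (k * p.1 + p.2) / k = p.1 := by
      rw [Nat.mul_add_div hk, Nat.div_eq_of_lt hp.2, add_zero]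
    have h2 : (k * p.1 + p.2) % k = p.2 := by
      rw [Nat.mul_add_mod, Nat.mod_eq_of_lt hp.2]
    exact Prod.ext h1 h2
  · intro m _; exact Nat.div_add_mod m k
  · intro p _; rfl

end AuxLemmas

private lemma sum_Hcorr {N : ℕ} [NeZero N] {F : Type*} [Fintype F] [DecidableEq F]
    (X Y : ZMod N → F) :
    ∑ τ : ZMod N, Hcorr X Y τ = ∑ a : F, countFreq X a * countFreq Y a := by
  have inner : ∀ t s : ZMod N,
      (∑ a : F, (if X t = a then 1 else 0) * (if Y s = a then 1 else 0))
        = (if X t = Y s then (1 : ℕ) else 0) := by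
    intro t s
    rw [Finset.sum_eq_single (X t)]
    · simp [eq_comm]
    · intro b _ hb; rw [if_neg (Ne.symm hb), zero_mul]
    · intro h; exact absurd (Finset.mem_univ _) h
  have lhs : ∑ τ : ZMod N, Hcorr X Y τ
      = ∑ t : ZMod N, ∑ s : ZMod N, (if X t = Y s then 1 else 0) := by
    simp only [Hcorr, Finset.card_filter]
    rw [Finset.sum_comm]
    exact Finset.sum_congr rfl fun t _ =>
      Fintype.sum_equiv (Equiv.addLeft t) _ _ (fun τ => rfl)
  calc ∑ τ : ZMod N, Hcorr X Y τ
      = ∑ t : ZMod N, ∑ s : ZMod N, (if X t = Y s then 1 else 0) := lhs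
    _ = ∑ t : ZMod N, ∑ s : ZMod N, ∑ a : F,
          (if X t = a then 1 else 0) * (if Y s = a then 1 else 0) :=
        Finset.sum_congr rfl fun t _ => Finset.sum_congr rfl fun s _ => (inner t s).symm
    _ = ∑ t : ZMod N, ∑ a : F, ∑ s : ZMod N,
          (if X t = a then 1 else 0) * (if Y s = a then 1 else 0) :=
        Finset.sum_congr rfl fun t _ => Finset.sum_comm
    _ = ∑ a : F, ∑ t : ZMod N, ∑ s : ZMod N,
          (if X t = a then 1 else 0) * (if Y s = a then 1 else 0) := Finset.sum_comm
    _ = ∑ a : F, countFreq X a * countFreq Y a :=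
        Finset.sum_congr rfl fun a _ => by
          rw [countFreq, countFreq, Finset.card_filter, Finset.card_filter,
            Finset.sum_mul_sum]

private lemma Hcorr_self_zero {N : ℕ} [NeZero N] {F : Type*} [DecidableEq F]
    (X : ZMod N → F) : Hcorr X X 0 = N := by
  have h : (Finset.univ.filter fun t : ZMod N => X t = X (t + 0)) = Finset.univ :=
    Finset.filter_true_of_mem fun t _ => by rw [add_zero]
  rw [Hcorr, h, Finset.card_univ, ZMod.card]

private lemma Sa_add_Sc {N L : ℕ} [NeZero N] {F : Type*} [Fintype F] [DecidableEq F]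
    (U : Fin L → ZMod N → F) :
    Sa U + Sc U + L * N = ∑ a : F, (countFreqSet U a) ^ 2 := by
  have htot : ∑ i : Fin L, ∑ j : Fin L, ∑ τ : ZMod N, Hcorr (U i) (U j) τ
      = ∑ a : F, (countFreqSet U a) ^ 2 := by
    calc ∑ i : Fin L, ∑ j : Fin L, ∑ τ : ZMod N, Hcorr (U i) (U j) τ
        = ∑ i : Fin L, ∑ j : Fin L, ∑ a : F, countFreq (U i) a * countFreq (U j) a :=
          Finset.sum_congr rfl fun i _ => Finset.sum_congr rfl fun j _ => sum_Hcorr _ _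
      _ = ∑ i : Fin L, ∑ a : F, ∑ j : Fin L, countFreq (U i) a * countFreq (U j) a :=
          Finset.sum_congr rfl fun i _ => Finset.sum_comm
      _ = ∑ a : F, ∑ i : Fin L, ∑ j : Fin L, countFreq (U i) a * countFreq (U j) a :=
          Finset.sum_comm
      _ = ∑ a : F, (countFreqSet U a) ^ 2 := Finset.sum_congr rfl fun a _ => by
          rw [countFreqSet, sq, Finset.sum_mul_sum]
  have hsplit : ∀ i : Fin L, ∑ j : Fin L, ∑ τ : ZMod N, Hcorr (U i) (U j) τ
      = (∑ j ∈ Finset.univ \ {i}, ∑ τ : ZMod N, Hcorr (U i) (U j) τ)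
        + ((∑ τ ∈ Finset.univ \ {(0 : ZMod N)}, Hcorr (U i) (U i) τ) + N) := by
    intro i
    rw [Finset.sum_eq_sum_sdiff_singleton_add (Finset.mem_univ i)]
    congr 1
    rw [Finset.sum_eq_sum_sdiff_singleton_add (Finset.mem_univ (0 : ZMod N)),
      Hcorr_self_zero]
  calc Sa U + Sc U + L * N
      = ∑ i : Fin L, ((∑ j ∈ Finset.univ \ {i}, ∑ τ : ZMod N, Hcorr (U i) (U j) τ)
          + ((∑ τ ∈ Finset.univ \ {(0 : ZMod N)}, Hcorr (U i) (U i) τ) + N)) := by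
        rw [Sa, Sc, Finset.sum_add_distrib, Finset.sum_add_distrib, Finset.sum_const,
          Finset.card_univ, Fintype.card_fin, smul_eq_mul]
        ring
    _ = ∑ i : Fin L, ∑ j : Fin L, ∑ τ : ZMod N, Hcorr (U i) (U j) τ :=
        Finset.sum_congr rfl fun i _ => (hsplit i).symm
    _ = ∑ a : F, (countFreqSet U a) ^ 2 := htot

private lemma optimalAHC_iff {N L : ℕ} [NeZero N] {F : Type*} [Fintype F] [DecidableEq F]
    (hN : 2 ≤ N) (hL : 2 ≤ L) (hM : 0 < Fintype.card F) (U : Fin L → ZMod N → F) :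
    optimalAHC U ↔
      (∑ a : F, (countFreqSet U a : ℚ) ^ 2) * (Fintype.card F) = ((L : ℚ) * N) ^ 2 := by
  have hC : (Sa U : ℚ) + Sc U + L * N = ∑ a : F, (countFreqSet U a : ℚ) ^ 2 := by
    exact_mod_cast congrArg (fun x : ℕ => (x : ℚ)) (Sa_add_Sc U)
  have hN2 : (2 : ℚ) ≤ N := by exact_mod_cast hN
  have hL2 : (2 : ℚ) ≤ L := by exact_mod_cast hL
  have hM0 : (Fintype.card F : ℚ) ≠ 0 := (Nat.cast_pos.mpr hM).ne'
  have hN0 : (N : ℚ) ≠ 0 := by linarith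
  have hL0 : (L : ℚ) ≠ 0 := by linarith
  have hN1 : (N : ℚ) - 1 ≠ 0 := by intro h; linarith
  have hL1 : (L : ℚ) - 1 ≠ 0 := by intro h; linarith
  have hA : Aa U / ((N : ℚ) * ((L : ℚ) - 1)) + Ac U / ((N : ℚ) - 1)
      = ((Sa U : ℚ) + Sc U) / ((L : ℚ) * ((L : ℚ) - 1) * N * ((N : ℚ) - 1)) := by
    simp only [Aa, Ac]
    field_simp
  have hD1 : ((L : ℚ) * ((L : ℚ) - 1) * N * ((N : ℚ) - 1)) ≠ 0 :=
    mul_ne_zero (mul_ne_zero (mul_ne_zero hL0 hL1) hN0) hN1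
  have hD2 : ((Fintype.card F : ℚ) * ((N : ℚ) - 1) * ((L : ℚ) - 1)) ≠ 0 :=
    mul_ne_zero (mul_ne_zero hM0 hN1) hL1
  unfold optimalAHC
  rw [hA, div_eq_div_iff hD1 hD2]
  constructor
  · intro h
    have h2 : ((∑ a : F, (countFreqSet U a : ℚ) ^ 2) * (Fintype.card F) - ((L : ℚ) * N) ^ 2)
        * (((N : ℚ) - 1) * ((L : ℚ) - 1)) = 0 := by
      linear_combination h - (Fintype.card F : ℚ) * (((N : ℚ) - 1) * ((L : ℚ) - 1)) * hC
    rcases mul_eq_zero.mp h2 with h3 | h3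
    · linarith [h3]
    · exact absurd h3 (mul_ne_zero hN1 hL1)
  · intro h
    linear_combination (((N : ℚ) - 1) * ((L : ℚ) - 1)) * h
      + (Fintype.card F : ℚ) * (((N : ℚ) - 1) * ((L : ℚ) - 1)) * hC

/-- Corollary 15 (Construction C). -/
theorem constructionC_optimal_AHC (N L k : ℕ) [NeZero N] [NeZero (k * N)] (hN : 2 ≤ N)
    (hk2 : 2 ≤ k) (hkL : k < L) (hdvd : k ∣ L)
    {F : Type*} [Fintype F] [DecidableEq F]
    (X : Fin L → ZMod N → F) (Y : Fin (L / k) → ZMod (k * N) → F)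
    (hY : ∀ (i : Fin (L / k)) (t0 t1 : ℕ), t0 < k → t1 < N →
      ∀ (hidx : k * (i : ℕ) + t0 < L),
      Y i ((k * t1 + t0 : ℕ) : ZMod (k * N)) = X ⟨k * (i : ℕ) + t0, hidx⟩ ((t1 : ℕ) : ZMod N))
    (hX : optimalAHC X) : optimalAHC Y := by
  have hk0 : 0 < k := by omega
  have hL2 : 2 ≤ L := by omega
  have hkL2 : 2 * k ≤ L := by
    obtain ⟨m, hm⟩ := hdvd
    rcases Nat.lt_or_ge m 2 with hm2 | hm2
    · interval_cases m <;> omega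
    · calc 2 * k = k * 2 := by ring
        _ ≤ k * m := Nat.mul_le_mul_left _ hm2
        _ = L := hm.symm
  have hm2 : 2 ≤ L / k := Nat.le_div_iff_mul_le hk0 |>.mpr (by omega)
  have hkN2 : 2 ≤ k * N := by
    have : 2 * 1 ≤ k * N := Nat.mul_le_mul hk2 (by omega)
    omega
  have hNonF : Nonempty F := ⟨X ⟨0, by omega⟩ 0⟩
  have hM : 0 < Fintype.card F := Fintype.card_pos
  have hkLk : k * (L / k) = L := Nat.mul_div_cancel' hdvd
  -- the frequency multisets of X and Y coincide
  have key : ∀ a : F, countFreqSet Y a = countFreqSet X a := by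
    intro a
    set g : ℕ → ℕ := fun j => if h : j < L then
        ∑ m ∈ Finset.range N, (if X ⟨j, h⟩ ((m : ℕ) : ZMod N) = a then 1 else 0)
      else 0 with hg
    have hXside : countFreqSet X a = ∑ j ∈ Finset.range L, g j := by
      have h1 : ∀ i : Fin L, countFreq (X i) a = g i.val := by
        intro i
        rw [hg]
        simp only [i.isLt, dif_pos]
        rw [countFreq, Finset.card_filter, sum_zmod (fun t => if X i t = a then 1 else 0)]
      rw [countFreqSet, Finset.sum_congr rfl fun i _ => h1 i]
      exact Fin.sum_univ_eq_sum_range g L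
    have hYside : ∀ i : Fin (L / k), countFreq (Y i) a
        = ∑ t0 ∈ Finset.range k, g (k * (i : ℕ) + t0) := by
      intro i
      have hidx : ∀ t0 : ℕ, t0 < k → k * (i : ℕ) + t0 < L := by
        intro t0 ht0
        calc k * (i : ℕ) + t0 < k * (i : ℕ) + k := by omega
          _ = k * ((i : ℕ) + 1) := by ring
          _ ≤ k * (L / k) := Nat.mul_le_mul_left _ (by omega)
          _ = L := hkLk
      rw [countFreq, Finset.card_filter,
        sum_zmod (fun s => if Y i s = a then 1 else 0),
        sum_range_mul' k N hk0 (fun m => if Y i ((m : ℕ) : ZMod (k * N)) = a then 1 else 0)]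
      rw [Finset.sum_comm]
      refine Finset.sum_congr rfl fun t0 ht0 => ?_
      have ht0' : t0 < k := Finset.mem_range.mp ht0
      rw [hg]
      simp only [hidx t0 ht0', dif_pos]
      refine Finset.sum_congr rfl fun t1 ht1 => ?_
      rw [hY i t0 t1 ht0' (Finset.mem_range.mp ht1) (hidx t0 ht0')]
    calc countFreqSet Y a
        = ∑ i : Fin (L / k), ∑ t0 ∈ Finset.range k, g (k * (i : ℕ) + t0) := by
          rw [countFreqSet]; exact Finset.sum_congr rfl fun i _ => hYside i
      _ = ∑ i ∈ Finset.range (L / k), ∑ t0 ∈ Finset.range k, g (k * i + t0) :=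
          Fin.sum_univ_eq_sum_range (fun j => ∑ t0 ∈ Finset.range k, g (k * j + t0)) (L / k)
      _ = ∑ j ∈ Finset.range (k * (L / k)), g j := (sum_range_mul' k (L / k) hk0 g).symm
      _ = ∑ j ∈ Finset.range L, g j := by rw [hkLk]
      _ = countFreqSet X a := hXside.symm
  rw [optimalAHC_iff hN hL2 hM X] at hX
  rw [optimalAHC_iff hkN2 hm2 hM Y]
  have hsum : (∑ a : F, (countFreqSet Y a : ℚ) ^ 2)
      = ∑ a : F, (countFreqSet X a : ℚ) ^ 2 := by
    exact Finset.sum_congr rfl fun a _ => by rw [key a]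
  have hLN : ((L / k : ℕ) : ℚ) * ((k * N : ℕ) : ℚ) = (L : ℚ) * (N : ℚ) := by
    have h1 : (L / k) * (k * N) = L * N := by rw [← mul_assoc, Nat.div_mul_cancel hdvd]
    exact_mod_cast congrArg (fun x : ℕ => (x : ℚ)) h1
  rw [hsum]
  calc (∑ a : F, (countFreqSet X a : ℚ) ^ 2) * (Fintype.card F)
      = ((L : ℚ) * N) ^ 2 := hX
    _ = (((L / k : ℕ) : ℚ) * ((k * N : ℕ) : ℚ)) ^ 2 := by rw [hLN]
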